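/- Let q > 1 be real. The Jackson integral representation Γ_{q^{-1}}(p) = (1−q^{-1})^{1−p} · ∑_{d∈ℤ} q^d E_{q^{-1}}(q^d/(1−q)) q^{dp} / q^d holds for real p > 0; i.e. Γ_{q^{-1}}(p) = (1−q^{-1})^{1−p} ∑_{d∈ℤ} E_{q^{-1}}(q^d/(1−q)) q^{dp}. -/

import Mathlib

open Real Finset Filter Topology

set_option maxHeartbeats 1000000

namespace Stmt9Aux

noncomputable def A (Q : ℝ) (n : ℕ) : ℝ := ∏ k ∈ Finset.range n, (1 - Q ^ (k + 1))

noncomputable def F (Q w : ℝ) : ℝ := ∏' r : ℕ, (1 - Q ^ r * w)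

noncomputable def S (Q w : ℝ) : ℝ := ∑' n : ℕ, w ^ n / A Q n

lemma factor_pos {Q w : ℝ} (hQ0 : 0 < Q) (hQ1 : Q < 1) (hw0 : 0 ≤ w) (hw1 : w < 1) (r : ℕ) :
    0 < 1 - Q ^ r * w := by
  have h1 : Q ^ r ≤ 1 := pow_le_one₀ hQ0.le hQ1.le
  have h2 : Q ^ r * w ≤ 1 * w := mul_le_mul_of_nonneg_right h1 hw0
  rw [one_mul] at h2
  linarith

lemma summable_log {Q w : ℝ} (hQ0 : 0 < Q) (hQ1 : Q < 1) (hw0 : 0 ≤ w) (hw1 : w < 1) :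
    Summable fun r : ℕ => Real.log (1 - Q ^ r * w) := by
  have key : ∀ r : ℕ, |Real.log (1 - Q ^ r * w)| ≤ Q ^ r * (w / (1 - w)) := by
    intro r
    have hf := factor_pos hQ0 hQ1 hw0 hw1 r
    have hx0 : 0 ≤ Q ^ r * w := mul_nonneg (pow_nonneg hQ0.le r) hw0
    have h1 : Q ^ r ≤ 1 := pow_le_one₀ hQ0.le hQ1.le
    have hQrw : Q ^ r * w ≤ w := by nlinarith
    have hlog : Real.log (1 - Q ^ r * w) ≤ 0 := Real.log_nonpos (by linarith) (by linarith)
    rw [abs_of_nonpos hlog, show -Real.log (1 - Q ^ r * w) = Real.log (1 - Q ^ r * w)⁻¹ from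
      (Real.log_inv _).symm]
    have hb := Real.log_le_sub_one_of_pos (inv_pos.mpr hf)
    have h2 : (1 - Q ^ r * w)⁻¹ - 1 = Q ^ r * w / (1 - Q ^ r * w) := by field_simp; ring
    rw [h2] at hb
    refine hb.trans ?_
    have h4 : 0 < 1 - w := by linarith
    have step : Q ^ r * w / (1 - Q ^ r * w) ≤ Q ^ r * w / (1 - w) := by
      gcongr
    refine step.trans ?_
    rw [mul_div_assoc]
  have hg : Summable fun r : ℕ => Q ^ r * (w / (1 - w)) :=
    (summable_geometric_of_lt_one hQ0.le hQ1).mul_right _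
  exact (hg.of_nonneg_of_le (fun r => abs_nonneg _) key).of_abs

lemma hasProd_F {Q w : ℝ} (hQ0 : 0 < Q) (hQ1 : Q < 1) (hw0 : 0 ≤ w) (hw1 : w < 1) :
    HasProd (fun r : ℕ => 1 - Q ^ r * w)
      (Real.exp (∑' r : ℕ, Real.log (1 - Q ^ r * w))) := by
  have h := ((summable_log hQ0 hQ1 hw0 hw1).hasSum).rexp
  have he : (rexp ∘ fun r : ℕ => Real.log (1 - Q ^ r * w)) = fun r : ℕ => 1 - Q ^ r * w :=
    funext fun r => Real.exp_log (factor_pos hQ0 hQ1 hw0 hw1 r)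
  rwa [he] at h

lemma multipliable_F {Q w : ℝ} (hQ0 : 0 < Q) (hQ1 : Q < 1) (hw0 : 0 ≤ w) (hw1 : w < 1) :
    Multipliable fun r : ℕ => 1 - Q ^ r * w :=
  (hasProd_F hQ0 hQ1 hw0 hw1).multipliable

lemma F_eq_exp {Q w : ℝ} (hQ0 : 0 < Q) (hQ1 : Q < 1) (hw0 : 0 ≤ w) (hw1 : w < 1) :
    F Q w = Real.exp (∑' r : ℕ, Real.log (1 - Q ^ r * w)) :=
  (hasProd_F hQ0 hQ1 hw0 hw1).tprod_eq

lemma F_pos {Q w : ℝ} (hQ0 : 0 < Q) (hQ1 : Q < 1) (hw0 : 0 ≤ w) (hw1 : w < 1) : 0 < F Q w := by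
  rw [F_eq_exp hQ0 hQ1 hw0 hw1]; exact Real.exp_pos _

lemma F_le_one {Q w : ℝ} (hQ0 : 0 < Q) (hQ1 : Q < 1) (hw0 : 0 ≤ w) (hw1 : w < 1) : F Q w ≤ 1 := by
  rw [F_eq_exp hQ0 hQ1 hw0 hw1]
  rw [Real.exp_le_one_iff]
  apply tsum_nonpos
  intro r
  have h1 := factor_pos hQ0 hQ1 hw0 hw1 r
  have h2 : 0 ≤ Q ^ r * w := mul_nonneg (pow_nonneg hQ0.le r) hw0
  exact Real.log_nonpos (by linarith) (by linarith)

/-- pow bounds for Q^n * w -/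
lemma pw0 {Q w : ℝ} (hQ0 : 0 < Q) (hw0 : 0 ≤ w) (n : ℕ) : 0 ≤ Q ^ n * w :=
  mul_nonneg (pow_nonneg hQ0.le n) hw0

lemma pw1 {Q w : ℝ} (hQ0 : 0 < Q) (hQ1 : Q < 1) (hw0 : 0 ≤ w) (hw1 : w < 1) (n : ℕ) :
    Q ^ n * w < 1 := by
  have h1 : Q ^ n ≤ 1 := pow_le_one₀ hQ0.le hQ1.le
  nlinarith

/-- `F Q w = (∏_{k<n} (1 - Q^k w)) * F Q (Q^n w)` -/
lemma F_shift {Q w : ℝ} (hQ0 : 0 < Q) (hQ1 : Q < 1) (hw0 : 0 ≤ w) (hw1 : w < 1) (n : ℕ) :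
    F Q w = (∏ k ∈ Finset.range n, (1 - Q ^ k * w)) * F Q (Q ^ n * w) := by
  have h := Multipliable.prod_mul_tprod_nat_mul' (f := fun r : ℕ => 1 - Q ^ r * w) (k := n) ?_
  · rw [F, ← h]
    congr 1
    rw [F]
    exact tprod_congr fun i => by rw [pow_add]; ring
  · have := multipliable_F hQ0 hQ1 (pw0 hQ0 hw0 n) (pw1 hQ0 hQ1 hw0 hw1 n)
    have he : (fun r : ℕ => 1 - Q ^ r * (Q ^ n * w)) = fun r : ℕ => 1 - Q ^ (r + n) * w :=
      funext fun r => by rw [pow_add]; ring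
    rwa [he] at this

lemma A_eq {Q : ℝ} (n : ℕ) : A Q n = ∏ k ∈ Finset.range n, (1 - Q ^ k * Q) :=
  Finset.prod_congr rfl fun k _ => by rw [pow_succ]

lemma F_Q_eq {Q : ℝ} (hQ0 : 0 < Q) (hQ1 : Q < 1) (n : ℕ) :
    F Q Q = A Q n * F Q (Q ^ n * Q) := by
  rw [A_eq]
  exact F_shift hQ0 hQ1 hQ0.le hQ1 n

lemma A_pos {Q : ℝ} (hQ0 : 0 < Q) (hQ1 : Q < 1) (n : ℕ) : 0 < A Q n := by
  apply Finset.prod_pos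
  intro k _
  have : Q ^ (k + 1) < 1 := pow_lt_one₀ hQ0.le hQ1 k.succ_ne_zero
  linarith

lemma FQ_le_A {Q : ℝ} (hQ0 : 0 < Q) (hQ1 : Q < 1) (n : ℕ) : F Q Q ≤ A Q n := by
  rw [F_Q_eq hQ0 hQ1 n]
  have h2 := F_le_one hQ0 hQ1 (pw0 hQ0 hQ0.le n) (pw1 hQ0 hQ1 hQ0.le hQ1 n)
  have := A_pos hQ0 hQ1 n
  nlinarith

lemma summable_S {Q w : ℝ} (hQ0 : 0 < Q) (hQ1 : Q < 1) (hw0 : 0 ≤ w) (hw1 : w < 1) :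
    Summable fun n : ℕ => w ^ n / A Q n := by
  have hFQ : 0 < F Q Q := F_pos hQ0 hQ1 hQ0.le hQ1
  apply Summable.of_nonneg_of_le
    (fun n => div_nonneg (pow_nonneg hw0 n) (A_pos hQ0 hQ1 n).le)
    (fun n => ?_)
    ((summable_geometric_of_lt_one hw0 hw1).div_const (F Q Q))
  exact div_le_div_of_nonneg_left (pow_nonneg hw0 n) hFQ (FQ_le_A hQ0 hQ1 n)

end Stmt9Aux

namespace Stmt9Aux

lemma S_rec {Q w : ℝ} (hQ0 : 0 < Q) (hQ1 : Q < 1) (hw0 : 0 ≤ w) (hw1 : w < 1) :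
    S Q (Q * w) = S Q w * (1 - w) := by
  have hQw0 : 0 ≤ Q * w := mul_nonneg hQ0.le hw0
  have hQw1 : Q * w < 1 := by nlinarith
  have hs1 := summable_S hQ0 hQ1 hw0 hw1
  have hs2 := summable_S hQ0 hQ1 hQw0 hQw1
  have key : S Q w - S Q (Q * w) = w * S Q w := by
    rw [S, S, ← Summable.tsum_sub hs1 hs2]
    have he : (fun n : ℕ => w ^ n / A Q n - (Q * w) ^ n / A Q n)
        = fun n : ℕ => w ^ n * (1 - Q ^ n) / A Q n := by
      funext n
      rw [mul_pow]
      ring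
    rw [he]
    have hsum : Summable fun n : ℕ => w ^ n * (1 - Q ^ n) / A Q n := by
      have := hs1.sub hs2
      rwa [he] at this
    rw [Summable.tsum_eq_zero_add hsum]
    simp only [pow_zero, sub_self, mul_zero, zero_div, zero_add]
    have he2 : (fun n : ℕ => w ^ (n + 1) * (1 - Q ^ (n + 1)) / A Q (n + 1))
        = fun n : ℕ => w * (w ^ n / A Q n) := by
      funext n
      have hA : A Q (n + 1) = A Q n * (1 - Q ^ (n + 1)) := by
        rw [A, A, Finset.prod_range_succ]
      have h1 : (1:ℝ) - Q ^ (n + 1) ≠ 0 := by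
        have : Q ^ (n + 1) < 1 := pow_lt_one₀ hQ0.le hQ1 n.succ_ne_zero
        linarith
      have h2 : A Q n ≠ 0 := (A_pos hQ0 hQ1 n).ne'
      rw [hA]
      field_simp
      ring
    rw [he2, tsum_mul_left, ← S]
  simp only [S] at key ⊢
  linarith [key]

lemma S_prod {Q w : ℝ} (hQ0 : 0 < Q) (hQ1 : Q < 1) (hw0 : 0 ≤ w) (hw1 : w < 1) (n : ℕ) :
    S Q (Q ^ n * w) = S Q w * ∏ k ∈ Finset.range n, (1 - Q ^ k * w) := by
  induction n with
  | zero => simp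
  | succ n ih =>
    have h1 : Q ^ (n + 1) * w = Q * (Q ^ n * w) := by ring
    rw [h1, S_rec hQ0 hQ1 (pw0 hQ0 hw0 n) (pw1 hQ0 hQ1 hw0 hw1 n), ih,
      Finset.prod_range_succ]
    ring

lemma S_sub_one_bound {Q w : ℝ} (hQ0 : 0 < Q) (hQ1 : Q < 1) (hw0 : 0 ≤ w) (hw1 : w < 1)
    (u : ℝ) (hu0 : 0 ≤ u) (huw : u ≤ w) :
    |S Q u - 1| ≤ u * ((1 - w)⁻¹ / F Q Q) := by
    have hFQ : 0 < F Q Q := F_pos hQ0 hQ1 hQ0.le hQ1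
    have hu1 : u < 1 := lt_of_le_of_lt huw hw1
    have hs := summable_S hQ0 hQ1 hu0 hu1
    have h0 : S Q u = 1 + ∑' n : ℕ, u ^ (n + 1) / A Q (n + 1) := by
      rw [S, Summable.tsum_eq_zero_add hs]
      simp [A]
    rw [h0]
    simp only [add_sub_cancel_left]
    have hs' : Summable fun n : ℕ => u ^ (n + 1) / A Q (n + 1) :=
      (summable_nat_add_iff 1).mpr hs
    have habs : |∑' n : ℕ, u ^ (n + 1) / A Q (n + 1)| ≤ ∑' n : ℕ, u ^ (n + 1) / A Q (n + 1) := by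
      rw [abs_of_nonneg]
      exact tsum_nonneg fun n => div_nonneg (pow_nonneg hu0 _) (A_pos hQ0 hQ1 _).le
    refine habs.trans ?_
    have hterm : ∀ n : ℕ, u ^ (n + 1) / A Q (n + 1) ≤ u * (w ^ n / F Q Q) := by
      intro n
      have h1 : u ^ (n + 1) / A Q (n + 1) ≤ u ^ (n + 1) / F Q Q :=
        div_le_div_of_nonneg_left (pow_nonneg hu0 _) hFQ (FQ_le_A hQ0 hQ1 _)
      refine h1.trans ?_
      rw [pow_succ', mul_div_assoc]
      gcongr
    have hgeo : Summable fun n : ℕ => u * (w ^ n / F Q Q) :=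
      (((summable_geometric_of_lt_one hw0 hw1).div_const (F Q Q)).mul_left u)
    calc (∑' n : ℕ, u ^ (n + 1) / A Q (n + 1)) ≤ ∑' n : ℕ, u * (w ^ n / F Q Q) :=
          Summable.tsum_le_tsum hterm hs' hgeo
      _ = u * ((1 - w)⁻¹ / F Q Q) := by
          rw [tsum_mul_left, tsum_div_const, tsum_geometric_of_lt_one hw0 hw1]

lemma S_tendsto_one {Q w : ℝ} (hQ0 : 0 < Q) (hQ1 : Q < 1) (hw0 : 0 ≤ w) (hw1 : w < 1) :
    Filter.Tendsto (fun n : ℕ => S Q (Q ^ n * w)) Filter.atTop (𝓝 1) := by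
  set C : ℝ := (1 - w)⁻¹ / F Q Q with hC
  have hto : Filter.Tendsto (fun n : ℕ => Q ^ n * w * C) Filter.atTop (𝓝 0) := by
    have := tendsto_pow_atTop_nhds_zero_of_lt_one hQ0.le hQ1
    have h2 := this.mul_const (w * C)
    rw [zero_mul] at h2
    exact h2.congr fun n => by ring
  have key : Filter.Tendsto (fun n : ℕ => S Q (Q ^ n * w) - 1) Filter.atTop (𝓝 0) := by
    apply squeeze_zero_norm (fun n => ?_) hto
    exact S_sub_one_bound hQ0 hQ1 hw0 hw1 (Q ^ n * w) (pw0 hQ0 hw0 n)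
      (by nlinarith [pow_le_one₀ hQ0.le hQ1.le (n := n), hw0])
  have h3 := key.add_const 1
  rw [zero_add] at h3
  exact h3.congr fun n => by ring

lemma S_mul_F {Q w : ℝ} (hQ0 : 0 < Q) (hQ1 : Q < 1) (hw0 : 0 ≤ w) (hw1 : w < 1) :
    S Q w * F Q w = 1 := by
  have h1 : Filter.Tendsto (fun n : ℕ => S Q w * ∏ k ∈ Finset.range n, (1 - Q ^ k * w))
      Filter.atTop (𝓝 (S Q w * F Q w)) := by
    have := (hasProd_F hQ0 hQ1 hw0 hw1).tendsto_prod_nat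
    rw [← F_eq_exp hQ0 hQ1 hw0 hw1] at this
    exact this.const_mul _
  have h2 : Filter.Tendsto (fun n : ℕ => S Q w * ∏ k ∈ Finset.range n, (1 - Q ^ k * w))
      Filter.atTop (𝓝 1) := by
    have := S_tendsto_one hQ0 hQ1 hw0 hw1
    exact this.congr fun n => S_prod hQ0 hQ1 hw0 hw1 n
  exact tendsto_nhds_unique h1 h2

end Stmt9Aux

namespace Stmt9Aux

lemma tprod_eq_zero_of_factor {f : ℕ → ℝ} (i : ℕ) (h : f i = 0) : ∏' n, f n = 0 := by
  have hev : ∀ᶠ s : Finset ℕ in Filter.atTop, ∏ b ∈ s, f b = 0 := by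
    filter_upwards [Filter.eventually_ge_atTop ({i} : Finset ℕ)] with s hs
    exact Finset.prod_eq_zero (hs (Finset.mem_singleton_self i)) h
  have hp : HasProd f 0 := tendsto_const_nhds.congr' (hev.mono fun s hs => hs.symm)
  exact hp.tprod_eq

end Stmt9Aux

open Stmt9Aux

/-- Koelink–Koornwinder Jackson-integral representation of the q-gamma function. -/
theorem stmt9 (q : ℝ) (hq : 1 < q) (p : ℝ) (hp : 0 < p) :
    (1 - q⁻¹) ^ (1 - p) *
        ((∏' r : ℕ, (1 - q⁻¹ ^ (r + 1))) / ∏' r : ℕ, (1 - q⁻¹ ^ r * q ^ (-p))) =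
      (1 - q⁻¹) ^ (1 - p) *
        ∑' d : ℤ, (∏' r : ℕ, (1 - q⁻¹ ^ (r + 1) * q ^ d)) * q ^ ((d : ℝ) * p) := by
  have hq0 : (0:ℝ) < q := by linarith
  set Q : ℝ := q⁻¹ with hQdef
  have hQ0 : 0 < Q := inv_pos.mpr hq0
  have hQ1 : Q < 1 := inv_lt_one_of_one_lt₀ hq
  set z : ℝ := q ^ (-p) with hzdef
  have hz0 : 0 < z := Real.rpow_pos_of_pos hq0 _
  have hz0' : 0 ≤ z := hz0.le
  have hz1 : z < 1 := Real.rpow_lt_one_of_one_lt_of_neg hq (by linarith)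
  -- the function under the ℤ-sum
  set g : ℤ → ℝ := fun d => (∏' r : ℕ, (1 - Q ^ (r + 1) * q ^ d)) * q ^ ((d : ℝ) * p) with hg
  -- g vanishes for positive d
  have hg_pos : ∀ d : ℤ, 0 < d → g d = 0 := by
    intro d hd
    have hm : ((d - 1).toNat : ℤ) = d - 1 := Int.toNat_of_nonneg (by omega)
    set m : ℕ := (d - 1).toNat
    have hfac : 1 - Q ^ (m + 1) * q ^ d = 0 := by
      have hd' : ((m + 1 : ℕ) : ℤ) = d := by push_cast; omega
      have h1 : Q ^ (m + 1) * q ^ d = 1 := by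
        rw [hQdef, inv_pow, ← zpow_natCast q (m + 1), hd']
        exact inv_mul_cancel₀ (zpow_ne_zero d hq0.ne')
      rw [h1, sub_self]
    rw [hg]
    simp only
    rw [tprod_eq_zero_of_factor m hfac, zero_mul]
  -- reduce to a sum over ℕ via n ↦ -n
  have hinj : Function.Injective (fun n : ℕ => -(n : ℤ)) := by
    intro a b hab
    simpa using hab
  have hsupp : Function.support g ⊆ Set.range (fun n : ℕ => -(n : ℤ)) := by
    intro d hd
    rcases le_or_gt d 0 with h | h
    · exact ⟨(-d).toNat, by simp [Int.toNat_of_nonneg (by omega : (0:ℤ) ≤ -d)]⟩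
    · exact absurd (hg_pos d h) hd
  have hsum_eq : ∑' d : ℤ, g d = ∑' n : ℕ, g (-(n : ℤ)) := (hinj.tsum_eq hsupp).symm
  -- evaluate g (-n)
  have hterm : ∀ n : ℕ, g (-(n : ℤ)) = F Q Q * (z ^ n / A Q n) := by
    intro n
    have h1 : (∏' r : ℕ, (1 - Q ^ (r + 1) * q ^ (-(n : ℤ)))) = F Q (Q ^ n * Q) := by
      rw [F]
      apply tprod_congr
      intro r
      have hz : q ^ (-(n:ℤ)) = Q ^ n := by
        rw [zpow_neg, zpow_natCast, hQdef, inv_pow]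
      rw [hz, ← pow_add]
      ring_nf
    have h2 : q ^ (((-(n : ℤ) : ℤ) : ℝ) * p) = z ^ n := by
      push_cast
      rw [hzdef, ← Real.rpow_natCast (q ^ (-p)) n, ← Real.rpow_mul hq0.le]
      ring_nf
    have h3 : F Q (Q ^ n * Q) = F Q Q / A Q n := by
      rw [F_Q_eq hQ0 hQ1 n]
      field_simp [(A_pos hQ0 hQ1 n).ne']
    rw [hg]
    simp only
    rw [h1, h2, h3]
    ring
  -- final computation
  have hFz : 0 < F Q z := F_pos hQ0 hQ1 hz0' hz1
  have hSF : S Q z * F Q z = 1 := S_mul_F hQ0 hQ1 hz0' hz1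
  have hnum : (∏' r : ℕ, (1 - Q ^ (r + 1))) = F Q Q := by
    rw [F]
    exact tprod_congr fun r => by rw [pow_succ]
  have hden : (∏' r : ℕ, (1 - Q ^ r * q ^ (-p))) = F Q z := rfl
  rw [hnum, hden, hsum_eq]
  congr 1
  rw [tsum_congr hterm, tsum_mul_left, ← S]
  have hS : S Q z = (F Q z)⁻¹ := by
    field_simp at hSF ⊢
    linarith [hSF]
  rw [hS, div_eq_mul_inv]
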